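/- Let (Xₙ)_{n≥0} be a sequence of positive reals tending to infinity, (sₙ)_{n≥1} a sequence of positive integers, and c ≥ 1 a constant with c^{-s_{n+1}} Xₙ^{s_{n+1}} X_{n-1} ≤ X_{n+1} ≤ c^{s_{n+1}} Xₙ^{s_{n+1}} X_{n-1} for all n ≥ 1. Define ηₙ by X_{n+1} = Xₙ^{ηₙ}. Then ηₙ = [s_{n+1}; sₙ, ..., s₁](1 + o(1)) as n → ∞, where [s_{n+1}; sₙ, ..., s₁] denotes the finite continued fraction s_{n+1} + 1/(sₙ + 1/(⋯ + 1/s₁)). -/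

import Mathlib

open Filter

/-- Value of the finite continued fraction `[a₀; a₁, ..., aₖ]` given as a list
`[a₀, a₁, ..., aₖ]` (with the convention `1/0 = 0` harmless here since all
partial quotients are positive). -/
noncomputable def cfVal : List ℝ → ℝ
  | [] => 0
  | a :: l => a + (cfVal l)⁻¹

lemma cfVal_nil : cfVal [] = 0 := rfl
lemma cfVal_cons (a : ℝ) (l : List ℝ) : cfVal (a :: l) = a + (cfVal l)⁻¹ := rfl

lemma cfVal_nonneg (l : List ℝ) (h : ∀ x ∈ l, 0 ≤ x) : 0 ≤ cfVal l := by
  induction l with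
  | nil => simp [cfVal_nil]
  | cons a l ih =>
    rw [cfVal_cons]
    have h1 := h a (by simp)
    have h2 : 0 ≤ cfVal l := ih fun x hx => h x (by simp [hx])
    have h3 : 0 ≤ (cfVal l)⁻¹ := inv_nonneg.2 h2
    linarith

noncomputable def cfSeq (s : ℕ → ℕ) (n : ℕ) : ℝ :=
  cfVal ((List.range (n + 1)).map fun i => (s (n + 1 - i) : ℝ))

lemma one_le_cfSeq (s : ℕ → ℕ) (hs : ∀ n, 1 ≤ s n) (n : ℕ) : 1 ≤ cfSeq s n := by
  unfold cfSeq
  rw [List.range_succ_eq_map, List.map_cons, cfVal_cons]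
  have h1 : (1:ℝ) ≤ (s (n + 1 - 0) : ℝ) := by exact_mod_cast hs _
  have h2 : 0 ≤ cfVal ((List.map Nat.succ (List.range n)).map fun i => (s (n + 1 - i) : ℝ)) := by
    apply cfVal_nonneg
    intro x hx
    simp only [List.mem_map] at hx
    obtain ⟨i, _, rfl⟩ := hx
    positivity
  have h3 := inv_nonneg.2 h2
  linarith

lemma cfSeq_succ (s : ℕ → ℕ) (n : ℕ) :
    cfSeq s (n + 1) = (s (n + 2) : ℝ) + (cfSeq s n)⁻¹ := by
  unfold cfSeq
  rw [List.range_succ_eq_map, List.map_cons, cfVal_cons, List.map_map]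
  have hf : ((fun i => (s (n + 1 + 1 - i) : ℝ)) ∘ Nat.succ) = fun i => (s (n + 1 - i) : ℝ) := by
    funext i
    simp only [Function.comp_apply]
    have : n + 1 + 1 - Nat.succ i = n + 1 - i := by omega
    rw [this]
  rw [hf]
  norm_num

lemma amhm (a b w : ℝ) (ha : 0 < a) (hb : 0 < b) (hw0 : 0 ≤ w) (hw1 : w ≤ 1/2) :
    ((1 - w) * a + w * b)⁻¹ ≤ (1 - w) * a⁻¹ + w * b⁻¹ := by
  have h1w : (0:ℝ) < 1 - w := by linarith
  have hs : 0 < (1 - w) * a + w * b := by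
    nlinarith [mul_nonneg hw0 hb.le, mul_pos h1w ha]
  rw [inv_eq_one_div, div_le_iff₀ hs, inv_eq_one_div, inv_eq_one_div]
  have key : ((1 - w) * b + w * a) * ((1 - w) * a + w * b) - a * b
      = w * (1 - w) * (a - b) ^ 2 := by ring
  have h2 : 0 ≤ w * (1 - w) * (a - b) ^ 2 :=
    mul_nonneg (mul_nonneg hw0 h1w.le) (sq_nonneg _)
  have hab : 0 < a * b := mul_pos ha hb
  have expand : ((1 - w) * (1 / a) + w * (1 / b)) * ((1 - w) * a + w * b)
      = (((1 - w) * b + w * a) * ((1 - w) * a + w * b)) / (a * b) := by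
    field_simp
  rw [expand, le_div_iff₀ hab]
  nlinarith

set_option maxHeartbeats 1000000 in
lemma core_step (S C' p e t : ℝ) (hS : 1 ≤ S) (hC' : 1 ≤ C')
    (hp : 0 < p) (ht0 : 0 ≤ t) (ht : t ≤ 1/2) (he : |e| ≤ S * t) :
    max ((S + p⁻¹ + e) / (S + C'⁻¹) - 1) (((S + p⁻¹ + e) / (S + C'⁻¹))⁻¹ - 1)
      ≤ 2 * t + (1/2) * max (p / C' - 1) ((p / C')⁻¹ - 1) := by
  have hC0 : (0:ℝ) < C' := lt_of_lt_of_le one_pos hC'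
  have hCi0 : 0 < C'⁻¹ := inv_pos.2 hC0
  have hCi : C'⁻¹ ≤ 1 := inv_le_one_of_one_le₀ hC'
  have hD : (0:ℝ) < S + C'⁻¹ := by linarith
  set m := max (p / C' - 1) ((p / C')⁻¹ - 1) with hmdef
  have hr'inv : (p / C')⁻¹ = C' / p := by rw [inv_div]
  have hm1 : p / C' - 1 ≤ m := le_max_left _ _
  have hm2 : C' / p - 1 ≤ m := by rw [← hr'inv]; exact le_max_right _ _
  have hm0 : 0 ≤ m := by
    rcases le_total (p / C') 1 with h | h
    · have hpc : p ≤ C' := by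
        have := (div_le_one hC0).1 h
        linarith
      have : 1 ≤ C' / p := (one_le_div hp).2 hpc
      linarith
    · linarith
  clear_value m
  have he1 : e ≤ S * t := (abs_le.1 he).2
  have he2 : -(S * t) ≤ e := (abs_le.1 he).1
  -- upper bound
  have hpinv : p⁻¹ ≤ C'⁻¹ * (1 + m) := by
    have h1 : p⁻¹ = C'⁻¹ * (C' / p) := by field_simp
    rw [h1]
    exact mul_le_mul_of_nonneg_left (by linarith) hCi0.le
  have hup : (S + p⁻¹ + e) / (S + C'⁻¹) - 1 ≤ 2 * t + (1/2) * m := by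
    rw [sub_le_iff_le_add, div_le_iff₀ hD]
    nlinarith [mul_nonneg hm0 (by linarith : (0:ℝ) ≤ S - C'⁻¹),
      mul_nonneg ht0 (by linarith : (0:ℝ) ≤ S - 1), mul_nonneg ht0 hCi0.le]
  -- lower (inverse) bound
  set w := C'⁻¹ / (S + C'⁻¹) with hwdef
  have hw0 : 0 < w := div_pos hCi0 hD
  have hw : w ≤ 1/2 := by
    rw [hwdef, div_le_iff₀ hD]
    linarith
  have hwS : (1 - w) * (S + C'⁻¹) = S := by
    rw [hwdef]
    field_simp
    ring
  have hwC : w * (S + C'⁻¹) = C'⁻¹ := by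
    rw [hwdef]
    field_simp
  clear_value w
  have hCp0 : 0 < C' / p := div_pos hC0 hp
  set A := (1 - w) * (1 - t) + w * (C' / p) with hAdef
  have hA0 : 0 < A := by
    rw [hAdef]
    have h1 : 0 < (1 - w) * (1 - t) := mul_pos (by linarith) (by linarith)
    have h2 : 0 < w * (C' / p) := mul_pos hw0 hCp0
    linarith
  have hAeq : A * (S + C'⁻¹) = (1 - t) * S + p⁻¹ := by
    have h1 : C'⁻¹ * (C' / p) = p⁻¹ := by field_simp
    calc A * (S + C'⁻¹)
        = (1 - t) * ((1 - w) * (S + C'⁻¹)) + (C' / p) * (w * (S + C'⁻¹)) := by ring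
      _ = (1 - t) * S + (C' / p) * C'⁻¹ := by rw [hwS, hwC]
      _ = (1 - t) * S + p⁻¹ := by rw [mul_comm (C' / p) C'⁻¹, h1]
  clear_value A
  have hAr : A ≤ (S + p⁻¹ + e) / (S + C'⁻¹) := by
    rw [le_div_iff₀ hD, hAeq]
    nlinarith
  have hrinv : ((S + p⁻¹ + e) / (S + C'⁻¹))⁻¹ ≤ A⁻¹ := inv_anti₀ hA0 hAr
  have hAM : A⁻¹ ≤ (1 - w) * (1 - t)⁻¹ + w * (p / C') := by
    have h := amhm (1 - t) (C' / p) w (by linarith) hCp0 hw0.le hw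
    rw [inv_div] at h
    rw [hAdef]
    exact h
  have hti : (1 - t)⁻¹ ≤ 1 + 2 * t := by
    rw [inv_eq_one_div, div_le_iff₀ (by linarith : (0:ℝ) < 1 - t)]
    nlinarith
  have hlow : ((S + p⁻¹ + e) / (S + C'⁻¹))⁻¹ - 1 ≤ 2 * t + (1/2) * m := by
    have h1 : (1 - w) * (1 - t)⁻¹ ≤ (1 - w) * (1 + 2 * t) :=
      mul_le_mul_of_nonneg_left hti (by linarith)
    have h2 : w * (p / C') ≤ w * (1 + m) := mul_le_mul_of_nonneg_left (by linarith) hw0.le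
    have h4 : (1 - w) * (1 + 2 * t) + w * (1 + m) ≤ 1 + 2 * t + (1/2) * m := by
      nlinarith [mul_nonneg ht0 hw0.le, mul_nonneg (by linarith : (0:ℝ) ≤ 1/2 - w) hm0]
    linarith
  exact max_le hup hlow

noncomputable def mSeq (s : ℕ → ℕ) (η : ℕ → ℝ) (n : ℕ) : ℝ :=
  max (η n / cfSeq s n - 1) ((η n / cfSeq s n)⁻¹ - 1)

/-- Lemma 4.1: if `(Xₙ)` is a sequence of positive reals tending to infinity and
satisfying `c^{-s_{n+1}} Xₙ^{s_{n+1}} X_{n-1} ≤ X_{n+1} ≤ c^{s_{n+1}} Xₙ^{s_{n+1}} X_{n-1}`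
for all `n ≥ 1`, and `ηₙ` is defined by `X_{n+1} = Xₙ^{ηₙ}`, then
`ηₙ = [s_{n+1}; sₙ, ..., s₁] (1 + o(1))` as `n → ∞`. -/
theorem stmt6 (X : ℕ → ℝ) (s : ℕ → ℕ) (c : ℝ) (η : ℕ → ℝ)
    (hX : ∀ n, 0 < X n) (hXtop : Tendsto X atTop atTop)
    (hs : ∀ n, 1 ≤ s n) (hc : 1 ≤ c)
    (hrec : ∀ n : ℕ, 1 ≤ n →
      c ^ (-(s (n + 1) : ℝ)) * X n ^ (s (n + 1) : ℝ) * X (n - 1) ≤ X (n + 1) ∧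
      X (n + 1) ≤ c ^ ((s (n + 1) : ℝ)) * X n ^ (s (n + 1) : ℝ) * X (n - 1))
    (hη : ∀ n, X (n + 1) = X n ^ η n) :
    Tendsto (fun n =>
        η n / cfVal ((List.range (n + 1)).map fun i => (s (n + 1 - i) : ℝ)))
      atTop (nhds 1) := by
  have hc0 : (0:ℝ) < c := lt_of_lt_of_le one_pos hc
  set L := Real.log c with hLdef
  have hL0 : 0 ≤ L := Real.log_nonneg hc
  set y : ℕ → ℝ := fun n => Real.log (X n) with hydef
  have hyrec : ∀ n, y (n + 1) = η n * y n := by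
    intro n
    simp only [hydef]
    rw [hη n, Real.log_rpow (hX n)]
  have hytop : Tendsto y atTop atTop := Real.tendsto_log_atTop.comp hXtop
  have hlog : ∀ n, 1 ≤ n →
      |y (n + 1) - ((s (n + 1) : ℝ) * y n + y (n - 1))| ≤ (s (n + 1) : ℝ) * L := by
    intro n hn
    obtain ⟨hlo, hhi⟩ := hrec n hn
    have hcp1 : 0 < c ^ (-(s (n + 1) : ℝ)) := Real.rpow_pos_of_pos hc0 _
    have hcp2 : 0 < c ^ ((s (n + 1) : ℝ)) := Real.rpow_pos_of_pos hc0 _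
    have hXp : 0 < X n ^ ((s (n + 1) : ℝ)) := Real.rpow_pos_of_pos (hX n) _
    have h1 : Real.log (c ^ (-(s (n + 1) : ℝ)) * X n ^ ((s (n + 1) : ℝ)) * X (n - 1))
        = -(s (n + 1) : ℝ) * L + (s (n + 1) : ℝ) * y n + y (n - 1) := by
      rw [Real.log_mul (mul_pos hcp1 hXp).ne' (hX (n - 1)).ne', Real.log_mul hcp1.ne' hXp.ne',
        Real.log_rpow hc0, Real.log_rpow (hX n)]
    have h2 : Real.log (c ^ ((s (n + 1) : ℝ)) * X n ^ ((s (n + 1) : ℝ)) * X (n - 1))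
        = (s (n + 1) : ℝ) * L + (s (n + 1) : ℝ) * y n + y (n - 1) := by
      rw [Real.log_mul (mul_pos hcp2 hXp).ne' (hX (n - 1)).ne', Real.log_mul hcp2.ne' hXp.ne',
        Real.log_rpow hc0, Real.log_rpow (hX n)]
    have hA : y (n + 1) ≤ (s (n + 1) : ℝ) * L + (s (n + 1) : ℝ) * y n + y (n - 1) := by
      have := Real.log_le_log (hX (n + 1)) hhi
      rw [h2] at this
      exact this
    have hB : -(s (n + 1) : ℝ) * L + (s (n + 1) : ℝ) * y n + y (n - 1) ≤ y (n + 1) := by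
      have := Real.log_le_log (mul_pos (mul_pos hcp1 hXp) (hX (n - 1))) hlo
      rw [h1] at this
      exact this
    rw [abs_le]
    constructor <;> linarith
  obtain ⟨N₀, hN₀⟩ := eventually_atTop.1
    ((hytop.eventually_ge_atTop 1).and (hytop.eventually_ge_atTop (2 * L)))
  have hηpos : ∀ n, N₀ ≤ n → 0 < η n := by
    intro n hn
    have h1 : 1 ≤ y n := (hN₀ n hn).1
    have h2 : 1 ≤ y (n + 1) := (hN₀ (n + 1) (by omega)).1
    have h3 := hyrec n
    nlinarith
  have hm0 : ∀ n, N₀ ≤ n → 0 ≤ mSeq s η n := by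
    intro n hn
    have hr0 : 0 < η n / cfSeq s n :=
      div_pos (hηpos n hn) (lt_of_lt_of_le one_pos (one_le_cfSeq s hs n))
    rw [mSeq]
    rcases le_total (η n / cfSeq s n) 1 with h | h
    · have : 1 ≤ (η n / cfSeq s n)⁻¹ := (one_le_inv₀ hr0).2 h
      exact le_max_of_le_right (by linarith)
    · exact le_max_of_le_left (by linarith)
  have hkey : ∀ n, N₀ + 1 ≤ n → mSeq s η n ≤ 2 * (L / y n) + (1/2) * mSeq s η (n - 1) := by
    intro n hn
    obtain ⟨j, rfl⟩ : ∃ j, n = j + 1 := ⟨n - 1, by omega⟩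
    simp only [Nat.add_sub_cancel]
    have hjN : N₀ ≤ j := by omega
    have hyj : 1 ≤ y j := (hN₀ j hjN).1
    have hyn : 1 ≤ y (j + 1) := (hN₀ (j + 1) (by omega)).1
    have hyn2L : 2 * L ≤ y (j + 1) := (hN₀ (j + 1) (by omega)).2
    have hy0 : 0 < y (j + 1) := by linarith
    have hηj : η j = y (j + 1) / y j := by
      rw [hyrec j]
      exact (mul_div_cancel_right₀ _ (by linarith : y j ≠ 0)).symm
    have hηjpos : 0 < η j := hηpos j hjN
    have ht0 : 0 ≤ L / y (j + 1) := div_nonneg hL0 hy0.le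
    have ht : L / y (j + 1) ≤ 1/2 := by
      rw [div_le_iff₀ hy0]
      linarith
    have hey : (η (j + 1) - (s (j + 2) : ℝ) - (η j)⁻¹) * y (j + 1)
        = y (j + 2) - ((s (j + 2) : ℝ) * y (j + 1) + y j) := by
      have h1 : (η j)⁻¹ * y (j + 1) = y j := by
        rw [hηj]
        field_simp
      have h2 : y (j + 2) = η (j + 1) * y (j + 1) := hyrec (j + 1)
      rw [sub_mul, sub_mul, h1, ← h2]
      ring
    have he : |η (j + 1) - (s (j + 2) : ℝ) - (η j)⁻¹| ≤ (s (j + 2) : ℝ) * (L / y (j + 1)) := by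
      have h3 := hlog (j + 1) (by omega)
      simp only [Nat.add_sub_cancel] at h3
      have h4 : |η (j + 1) - (s (j + 2) : ℝ) - (η j)⁻¹| * y (j + 1) ≤ (s (j + 2) : ℝ) * L := by
        rw [← abs_of_pos hy0, ← abs_mul, hey]
        exact h3
      rw [← mul_div_assoc, le_div_iff₀ hy0]
      linarith
    have hS1 : (1:ℝ) ≤ (s (j + 2) : ℝ) := by exact_mod_cast hs _
    have hcore := core_step (s (j + 2) : ℝ) (cfSeq s j) (η j)
      (η (j + 1) - (s (j + 2) : ℝ) - (η j)⁻¹) (L / y (j + 1))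
      hS1 (one_le_cfSeq s hs j) hηjpos ht0 ht he
    have hη1 : η (j + 1) = (s (j + 2) : ℝ) + (η j)⁻¹ + (η (j + 1) - (s (j + 2) : ℝ) - (η j)⁻¹) := by
      ring
    rw [mSeq, mSeq, cfSeq_succ s j]
    rw [← hη1] at hcore
    exact hcore
  -- conclusion
  show Tendsto (fun n => η n / cfSeq s n) atTop (nhds 1)
  rw [Metric.tendsto_atTop]
  intro ε hε
  obtain ⟨N₁', hN₁'⟩ := eventually_atTop.1 (hytop.eventually_ge_atTop (8 * L / ε))
  set N₁ := max N₁' (N₀ + 1) with hN₁def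
  have hN₁N₀ : N₀ + 1 ≤ N₁ := le_max_right _ _
  have hN₁a : ∀ n, N₁ ≤ n → 2 * (L / y n) ≤ ε / 4 := by
    intro n hn
    have h1 : 8 * L / ε ≤ y n := hN₁' n (le_trans (le_max_left _ _) hn)
    have h2 : 0 < y n := by linarith [(hN₀ n (by omega)).1]
    have h3 : 8 * L ≤ y n * ε := by
      have := (div_le_iff₀ hε).1 h1
      linarith
    have h4 : L / y n ≤ ε / 8 := by
      rw [div_le_iff₀ h2]
      nlinarith
    linarith
  have hmN₁ : 0 ≤ mSeq s η N₁ := hm0 N₁ (by omega)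
  have hind : ∀ k, mSeq s η (N₁ + k) ≤ ε / 2 + (1/2)^k * mSeq s η N₁ := by
    intro k
    induction k with
    | zero =>
      simp only [Nat.add_zero, pow_zero, one_mul]
      linarith
    | succ k ih =>
      have h1 := hkey (N₁ + k + 1) (by omega)
      simp only [Nat.add_sub_cancel] at h1
      have h2 := hN₁a (N₁ + k + 1) (by omega)
      have h3 : ((1:ℝ)/2)^(k+1) = (1/2)^k * (1/2) := pow_succ _ _
      have h4 : (0:ℝ) ≤ (1/2)^k := by positivity
      have h5 : (0:ℝ) ≤ (1/2:ℝ)^k * mSeq s η N₁ := mul_nonneg h4 hmN₁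
      have h6 : N₁ + (k + 1) = N₁ + k + 1 := by omega
      rw [h6, h3]
      nlinarith
  have hpow : Tendsto (fun k => ((1:ℝ)/2)^k * mSeq s η N₁) atTop (nhds 0) := by
    have := (tendsto_pow_atTop_nhds_zero_of_lt_one (by norm_num : (0:ℝ) ≤ 1/2)
      (by norm_num : (1:ℝ)/2 < 1)).mul_const (mSeq s η N₁)
    simpa using this
  obtain ⟨K, hK⟩ := eventually_atTop.1 (hpow.eventually (gt_mem_nhds (by linarith : (0:ℝ) < ε / 4)))
  refine ⟨N₁ + K, fun n hn => ?_⟩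
  have hkn : mSeq s η n ≤ ε / 2 + (1/2)^(n - N₁) * mSeq s η N₁ := by
    have := hind (n - N₁)
    rwa [Nat.add_sub_cancel' (by omega)] at this
  have hKn : ((1:ℝ)/2)^(n - N₁) * mSeq s η N₁ < ε / 4 := hK _ (by omega)
  have hmn : mSeq s η n < 3 * ε / 4 := by linarith
  have hC1 : 1 ≤ cfSeq s n := one_le_cfSeq s hs n
  have hr0 : 0 < η n / cfSeq s n := div_pos (hηpos n (by omega)) (by linarith)
  have hle1 : η n / cfSeq s n - 1 ≤ mSeq s η n := le_max_left _ _
  have hle2 : (η n / cfSeq s n)⁻¹ - 1 ≤ mSeq s η n := le_max_right _ _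
  rw [Real.dist_eq, abs_sub_lt_iff]
  constructor
  · linarith
  · rcases le_total 1 (η n / cfSeq s n) with h | h
    · linarith
    · have h3 : (η n / cfSeq s n) * (η n / cfSeq s n)⁻¹ = 1 := mul_inv_cancel₀ hr0.ne'
      nlinarith [mul_le_mul_of_nonneg_left hle2 hr0.le,
        mul_nonneg (by linarith : (0:ℝ) ≤ 1 - η n / cfSeq s n) (hm0 n (by omega))]
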